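/- If g : ℕ → ℝ is weakly decreasing with g(1) < g(0), then the function p ↦ E[g(X(n,p))], where X(n,p) is Binomial(n,p), is strictly decreasing in p on (0,1). -/

import Mathlib

open Finset

noncomputable def binExp (n : ℕ) (p : ℝ) (g : ℕ → ℝ) : ℝ :=
  ∑ ℓ ∈ Finset.range (n + 1), (n.choose ℓ : ℝ) * p ^ ℓ * (1 - p) ^ (n - ℓ) * g ℓ

lemma hasDerivAt_term (c : ℝ) (a b : ℕ) (x : ℝ) :
    HasDerivAt (fun p : ℝ => c * (p ^ a * (1 - p) ^ b))
      (c * ((a : ℝ) * x ^ (a - 1) * (1 - x) ^ b -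
        x ^ a * ((b : ℝ) * (1 - x) ^ (b - 1)))) x := by
  have h2 : HasDerivAt (fun p : ℝ => (1 - p) ^ b)
      ((b : ℝ) * (1 - x) ^ (b - 1) * (0 - 1)) x :=
    (hasDerivAt_pow b (1 - x)).comp x ((hasDerivAt_const x (1:ℝ)).sub (hasDerivAt_id x))
  have h : HasDerivAt (fun p : ℝ => c * (p ^ a * (1 - p) ^ b))
      (c * ((a : ℝ) * x ^ (a - 1) * (1 - x) ^ b + x ^ a * ((b : ℝ) * (1 - x) ^ (b - 1) * (0 - 1)))) x :=
    ((hasDerivAt_pow a x).mul h2).const_mul c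
  convert h using 1
  ring

theorem stmt1 (n : ℕ) (hn : 1 ≤ n) (g : ℕ → ℝ) (hg : Antitone g) (hg01 : g 1 < g 0) :
    StrictAntiOn (fun p => binExp n p g) (Set.Ioo 0 1) := by
  obtain ⟨m, rfl⟩ : ∃ m, n = m + 1 := ⟨n - 1, (Nat.succ_pred_eq_of_pos hn).symm⟩
  have key : ∀ x : ℝ, HasDerivAt (fun p => binExp (m + 1) p g)
      (((m : ℝ) + 1) * ∑ ℓ ∈ Finset.range (m + 1),
        ((m.choose ℓ : ℝ) * x ^ ℓ * (1 - x) ^ (m - ℓ)) * (g (ℓ + 1) - g ℓ)) x := by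
    intro x
    have hsum : HasDerivAt (fun p => binExp (m + 1) p g)
        (∑ ℓ ∈ Finset.range (m + 2), (((m + 1).choose ℓ : ℝ) * g ℓ) *
          ((ℓ : ℝ) * x ^ (ℓ - 1) * (1 - x) ^ (m + 1 - ℓ) -
            x ^ ℓ * (((m + 1 - ℓ : ℕ) : ℝ) * (1 - x) ^ (m + 1 - ℓ - 1)))) x := by
      have : (fun p => binExp (m + 1) p g) =
          fun p => ∑ ℓ ∈ Finset.range (m + 2),
            (((m + 1).choose ℓ : ℝ) * g ℓ) * (p ^ ℓ * (1 - p) ^ (m + 1 - ℓ)) := by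
        funext p; unfold binExp; apply Finset.sum_congr rfl; intros; ring
      rw [this]
      exact HasDerivAt.fun_sum fun ℓ _ => hasDerivAt_term _ ℓ (m + 1 - ℓ) x
    convert hsum using 1
    rw [Finset.mul_sum]
    have split : ∀ ℓ ∈ Finset.range (m + 2),
        (((m + 1).choose ℓ : ℝ) * g ℓ) *
          ((ℓ : ℝ) * x ^ (ℓ - 1) * (1 - x) ^ (m + 1 - ℓ) -
            x ^ ℓ * (((m + 1 - ℓ : ℕ) : ℝ) * (1 - x) ^ (m + 1 - ℓ - 1))) =
        (((m + 1).choose ℓ : ℝ) * (ℓ : ℝ) * g ℓ * (x ^ (ℓ - 1) * (1 - x) ^ (m + 1 - ℓ)))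
        - (((m + 1).choose ℓ : ℝ) * ((m + 1 - ℓ : ℕ) : ℝ) * g ℓ *
            (x ^ ℓ * (1 - x) ^ (m + 1 - ℓ - 1))) := by
      intro ℓ _; ring
    rw [Finset.sum_congr rfl split, Finset.sum_sub_distrib]
    have hA : ∑ ℓ ∈ Finset.range (m + 2),
        (((m + 1).choose ℓ : ℝ) * (ℓ : ℝ) * g ℓ * (x ^ (ℓ - 1) * (1 - x) ^ (m + 1 - ℓ))) =
        ∑ ℓ ∈ Finset.range (m + 1),
          (((m : ℝ) + 1) * (m.choose ℓ : ℝ) * g (ℓ + 1) * (x ^ ℓ * (1 - x) ^ (m - ℓ))) := by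
      rw [Finset.sum_range_succ']
      simp only [Nat.choose_zero_right, Nat.cast_zero, Nat.cast_one, one_mul, zero_mul,
        mul_zero, add_zero]
      apply Finset.sum_congr rfl
      intro ℓ hℓ
      rw [Finset.mem_range] at hℓ
      have hc : ((m + 1).choose (ℓ + 1) : ℝ) * ((ℓ : ℝ) + 1) =
          ((m : ℝ) + 1) * (m.choose ℓ : ℝ) := by
        have h2 := congrArg (fun k : ℕ => (k : ℝ)) (Nat.add_one_mul_choose_eq m ℓ)
        push_cast at h2
        linarith [h2]
      push_cast
      linear_combination (g (ℓ + 1) * (x ^ ℓ * (1 - x) ^ (m - ℓ))) * hc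
    have hB : ∑ ℓ ∈ Finset.range (m + 2),
        (((m + 1).choose ℓ : ℝ) * ((m + 1 - ℓ : ℕ) : ℝ) * g ℓ *
          (x ^ ℓ * (1 - x) ^ (m + 1 - ℓ - 1))) =
        ∑ ℓ ∈ Finset.range (m + 1),
          (((m : ℝ) + 1) * (m.choose ℓ : ℝ) * g ℓ * (x ^ ℓ * (1 - x) ^ (m - ℓ))) := by
      rw [Finset.sum_range_succ]
      rw [show (((m + 1).choose (m + 1) : ℝ) * ((m + 1 - (m + 1) : ℕ) : ℝ) * g (m + 1) *
          (x ^ (m + 1) * (1 - x) ^ (m + 1 - (m + 1) - 1))) = 0 by simp, add_zero]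
      apply Finset.sum_congr rfl
      intro ℓ hℓ
      rw [Finset.mem_range] at hℓ
      have hc : ((m + 1).choose ℓ : ℝ) * ((m + 1 - ℓ : ℕ) : ℝ) =
          ((m : ℝ) + 1) * (m.choose ℓ : ℝ) := by
        have h2 := congrArg (fun k : ℕ => (k : ℝ)) (Nat.choose_mul_succ_eq m ℓ)
        push_cast [Nat.cast_sub (by omega : ℓ ≤ m + 1)] at h2
        rw [Nat.cast_sub (by omega : ℓ ≤ m + 1)]
        push_cast
        linarith [h2]
      have he : m + 1 - ℓ - 1 = m - ℓ := by omega
      rw [he]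
      linear_combination (g ℓ * (x ^ ℓ * (1 - x) ^ (m - ℓ))) * hc
    rw [hA, hB, ← Finset.sum_sub_distrib]
    apply Finset.sum_congr rfl
    intro ℓ _
    ring
  have hderiv_neg : ∀ x ∈ interior (Set.Ioo (0:ℝ) 1),
      deriv (fun p => binExp (m + 1) p g) x < 0 := by
    rw [interior_Ioo]
    intro x hx
    obtain ⟨hx0, hx1⟩ := hx
    have h1x : (0:ℝ) < 1 - x := by linarith
    rw [(key x).deriv]
    have hsum_neg : ∑ ℓ ∈ Finset.range (m + 1),
        ((m.choose ℓ : ℝ) * x ^ ℓ * (1 - x) ^ (m - ℓ)) * (g (ℓ + 1) - g ℓ) < 0 := by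
      have := Finset.sum_lt_sum (f := fun ℓ =>
          ((m.choose ℓ : ℝ) * x ^ ℓ * (1 - x) ^ (m - ℓ)) * (g (ℓ + 1) - g ℓ))
        (g := fun _ => (0:ℝ)) (s := Finset.range (m + 1)) ?_ ?_
      · simpa using this
      · intro ℓ _
        apply mul_nonpos_of_nonneg_of_nonpos
        · exact mul_nonneg (mul_nonneg (Nat.cast_nonneg _) (pow_pos hx0 _).le)
            (pow_pos h1x _).le
        · linarith [hg (Nat.le_succ ℓ)]
      · refine ⟨0, Finset.mem_range.mpr (by omega), ?_⟩
        apply mul_neg_of_pos_of_neg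
        · simp only [Nat.choose_zero_right, Nat.cast_one, one_mul, pow_zero, Nat.sub_zero]
          exact pow_pos h1x m
        · simpa using sub_neg.mpr hg01
    have hn' : (0:ℝ) < (m : ℝ) + 1 := by positivity
    exact mul_neg_of_pos_of_neg hn' hsum_neg
  have hcont : ContinuousOn (fun p => binExp (m + 1) p g) (Set.Ioo 0 1) := by
    apply Continuous.continuousOn
    unfold binExp
    continuity
  exact strictAntiOn_of_deriv_neg (convex_Ioo (0:ℝ) 1) hcont hderiv_neg
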